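/- Lipschitz dependence of projected quantile functions on the direction: Let R > 0 and let Q be a probability measure on ℝ^d supported in the closed ball B̄(0,R). Then for all unit vectors u, v ∈ S^{d−1} and all t ∈ (0,1], |F_{Q,u}^{-1}(t) − F_{Q,v}^{-1}(t)| ≤ R·‖u − v‖₂. -/

import Mathlib

open MeasureTheory Set

/-- The unit sphere `S^{d-1}` in `ℝ^d`. -/
def sph (d : ℕ) : Set (EuclideanSpace ℝ (Fin d)) :=
  Metric.sphere (0 : EuclideanSpace ℝ (Fin d)) 1

/-- CDF of the projection of `μ` onto direction `u`. -/
noncomputable def projCDF {d : ℕ} (μ : Measure (EuclideanSpace ℝ (Fin d)))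
    (u : EuclideanSpace ℝ (Fin d)) (x : ℝ) : ℝ :=
  (μ {y | (inner ℝ u y : ℝ) ≤ x}).toReal

/-- Quantile function of the projection of `μ` onto direction `u`:
`F_{μ,u}^{-1}(t) = inf {x ∈ [-R,R] : F_{μ,u}(x) ≥ t}`. -/
noncomputable def projQuantile {d : ℕ} (R : ℝ) (μ : Measure (EuclideanSpace ℝ (Fin d)))
    (u : EuclideanSpace ℝ (Fin d)) (t : ℝ) : ℝ :=
  sInf {x : ℝ | x ∈ Set.Icc (-R) R ∧ t ≤ projCDF μ u x}

/-- Topological support of a measure on `ℝ`. -/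
def msupp (μ : Measure ℝ) : Set ℝ := {x | ∀ ε > (0 : ℝ), 0 < μ (Metric.ball x ε)}

lemma projQuantile_one_sided
    (d : ℕ) (R : ℝ) (hR : 0 < R)
    (Q : Measure (EuclideanSpace ℝ (Fin d))) [IsProbabilityMeasure Q]
    (hQ : Q (Metric.closedBall 0 R) = 1)
    (u v : EuclideanSpace ℝ (Fin d)) (hu : ‖u‖ = 1) (hv : ‖v‖ = 1)
    (t : ℝ) (ht : t ∈ Set.Ioc (0 : ℝ) 1) :
    projQuantile R Q u t ≤ projQuantile R Q v t + R * ‖u - v‖ := by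
  set δ := R * ‖u - v‖ with hδdef
  have hδ : 0 ≤ δ := mul_nonneg hR.le (norm_nonneg _)
  -- key measure inequality
  have key : ∀ x : ℝ, projCDF Q v x ≤ projCDF Q u (x + δ) := by
    intro x
    have hsub : {y : EuclideanSpace ℝ (Fin d) | (inner ℝ v y : ℝ) ≤ x} ∩
        Metric.closedBall 0 R ⊆ {y | (inner ℝ u y : ℝ) ≤ x + δ} := by
      rintro y ⟨hy1, hy2⟩
      have hyR : ‖y‖ ≤ R := by simpa using hy2
      have : (inner ℝ u y : ℝ) = (inner ℝ v y : ℝ) + (inner ℝ (u - v) y : ℝ) := by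
        rw [inner_sub_left]; ring
      have hb : (inner ℝ (u - v) y : ℝ) ≤ ‖u - v‖ * ‖y‖ := real_inner_le_norm _ _
      have : (inner ℝ u y : ℝ) ≤ x + ‖u - v‖ * ‖y‖ := by
        rw [this]; exact add_le_add hy1 hb
      refine le_trans this ?_
      have : ‖u - v‖ * ‖y‖ ≤ ‖u - v‖ * R := by
        exact mul_le_mul_of_nonneg_left hyR (norm_nonneg _)
      simp only [hδdef]
      nlinarith
    have hcompl : Q (Metric.closedBall (0 : EuclideanSpace ℝ (Fin d)) R)ᶜ = 0 := by
      rw [measure_compl measurableSet_closedBall (measure_ne_top Q _), hQ, measure_univ]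
      simp
    have hQle : Q {y : EuclideanSpace ℝ (Fin d) | (inner ℝ v y : ℝ) ≤ x}
        ≤ Q {y | (inner ℝ u y : ℝ) ≤ x + δ} := by
      calc Q {y : EuclideanSpace ℝ (Fin d) | (inner ℝ v y : ℝ) ≤ x}
          ≤ Q (({y : EuclideanSpace ℝ (Fin d) | (inner ℝ v y : ℝ) ≤ x} ∩
            Metric.closedBall 0 R) ∪ (Metric.closedBall (0 : EuclideanSpace ℝ (Fin d)) R)ᶜ) := by
            apply measure_mono
            intro y hy
            by_cases h : y ∈ Metric.closedBall (0 : EuclideanSpace ℝ (Fin d)) R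
            · exact Or.inl ⟨hy, h⟩
            · exact Or.inr h
        _ ≤ Q ({y : EuclideanSpace ℝ (Fin d) | (inner ℝ v y : ℝ) ≤ x} ∩
            Metric.closedBall 0 R) + Q (Metric.closedBall (0 : EuclideanSpace ℝ (Fin d)) R)ᶜ :=
            measure_union_le _ _
        _ = Q ({y : EuclideanSpace ℝ (Fin d) | (inner ℝ v y : ℝ) ≤ x} ∩
            Metric.closedBall 0 R) := by rw [hcompl, add_zero]
        _ ≤ Q {y | (inner ℝ u y : ℝ) ≤ x + δ} := measure_mono hsub
    exact ENNReal.toReal_mono (measure_ne_top Q _) hQle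
  -- R is in every index set
  have hRmem : ∀ w : EuclideanSpace ℝ (Fin d), ‖w‖ = 1 →
      R ∈ {x : ℝ | x ∈ Set.Icc (-R) R ∧ t ≤ projCDF Q w x} := by
    intro w hw
    refine ⟨⟨by linarith, le_rfl⟩, ?_⟩
    have hball : Metric.closedBall (0 : EuclideanSpace ℝ (Fin d)) R ⊆
        {y | (inner ℝ w y : ℝ) ≤ R} := by
      intro y hy
      have hyR : ‖y‖ ≤ R := by simpa using hy
      have := real_inner_le_norm w y
      simp only [mem_setOf_eq]
      calc (inner ℝ w y : ℝ) ≤ ‖w‖ * ‖y‖ := real_inner_le_norm w y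
        _ = ‖y‖ := by rw [hw, one_mul]
        _ ≤ R := hyR
    have h1 : (1 : ENNReal) ≤ Q {y | (inner ℝ w y : ℝ) ≤ R} := hQ ▸ measure_mono hball
    have : (1 : ℝ) ≤ projCDF Q w R := by
      have := ENNReal.toReal_mono (measure_ne_top Q _) h1
      simpa [projCDF] using this
    linarith [ht.2]
  have hbdd : ∀ w : EuclideanSpace ℝ (Fin d),
      BddBelow {x : ℝ | x ∈ Set.Icc (-R) R ∧ t ≤ projCDF Q w x} :=
    fun w => ⟨-R, fun x hx => hx.1.1⟩
  -- main estimate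
  rw [projQuantile, projQuantile]
  have hne : {x : ℝ | x ∈ Set.Icc (-R) R ∧ t ≤ projCDF Q v x}.Nonempty :=
    ⟨R, hRmem v hv⟩
  rw [← sub_le_iff_le_add]
  apply le_csInf hne
  intro x hx
  rw [sub_le_iff_le_add]
  have hmem : min (x + δ) R ∈ {x : ℝ | x ∈ Set.Icc (-R) R ∧ t ≤ projCDF Q u x} := by
    constructor
    · exact ⟨le_min (by linarith [hx.1.1]) (by linarith), min_le_right _ _⟩
    · rcases le_total (x + δ) R with h | h
      · rw [min_eq_left h]
        exact le_trans hx.2 (key x)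
      · rw [min_eq_right h]
        exact (hRmem u hu).2
  calc sInf {x : ℝ | x ∈ Set.Icc (-R) R ∧ t ≤ projCDF Q u x}
      ≤ min (x + δ) R := csInf_le (hbdd u) hmem
    _ ≤ x + δ := min_le_left _ _

/-- Lipschitz dependence of projected quantile functions on the direction. -/
theorem projQuantile_lipschitz_in_direction
    (d : ℕ) (hd : 1 ≤ d) (R : ℝ) (hR : 0 < R)
    (Q : Measure (EuclideanSpace ℝ (Fin d))) [IsProbabilityMeasure Q]
    (hQ : Q (Metric.closedBall 0 R) = 1) :
    ∀ u ∈ sph d, ∀ v ∈ sph d, ∀ t ∈ Set.Ioc (0 : ℝ) 1,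
      |projQuantile R Q u t - projQuantile R Q v t| ≤ R * ‖u - v‖ := by
  intro u hu v hv t ht
  have hu' : ‖u‖ = 1 := by simpa [sph, mem_sphere_zero_iff_norm] using hu
  have hv' : ‖v‖ = 1 := by simpa [sph, mem_sphere_zero_iff_norm] using hv
  rw [abs_sub_le_iff]
  constructor
  · have := projQuantile_one_sided d R hR Q hQ u v hu' hv' t ht
    linarith
  · have := projQuantile_one_sided d R hR Q hQ v u hv' hu' t ht
    rw [norm_sub_rev] at this
    linarith
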